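/- Let A be an n×n matrix with entries in a totally ordered commutative group. A cover (μ, ν) of A (vectors with a_{i,j} ≤ μ_i + ν_j for all i,j) is minimal (i.e., minimizes Σ_i (μ_i + ν_i)) if and only if there exists a permutation σ of [1,n] such that a_{i,σ(i)} = μ_i + ν_{σ(i)} for all i. In this case Σ_i (μ_i + ν_i) = 𝒪_A, the tropical determinant of A. -/

import Mathlib

/-- The tropical determinant of an `n × n` matrix over a totally ordered
commutative group: the maximal transversal sum over all permutations. -/
def tropDet {n : ℕ} {M : Type*} [AddCommGroup M] [LinearOrder M] [IsOrderedAddMonoid M]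
    (A : Fin n → Fin n → M) : M :=
  Finset.univ.sup' ⟨1, Finset.mem_univ 1⟩
    fun σ : Equiv.Perm (Fin n) => ∑ i, A i (σ i)

/-- `(μ, ν)` is a cover of `A`: `a_{i,j} ≤ μ_i + ν_j` for all `i, j`. -/
def IsCover {n : ℕ} {M : Type*} [AddCommGroup M] [LinearOrder M] [IsOrderedAddMonoid M]
    (A : Fin n → Fin n → M) (μ ν : Fin n → M) : Prop :=
  ∀ i j, A i j ≤ μ i + ν j

/-- A cover is minimal when it minimizes `∑ i, (μ i + ν i)` among all covers. -/
def IsMinimalCover {n : ℕ} {M : Type*} [AddCommGroup M] [LinearOrder M] [IsOrderedAddMonoid M]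
    (A : Fin n → Fin n → M) (μ ν : Fin n → M) : Prop :=
  IsCover A μ ν ∧
    ∀ μ' ν', IsCover A μ' ν' → ∑ i, (μ i + ν i) ≤ ∑ i, (μ' i + ν' i)

lemma transversal_le_cover {n : ℕ} {M : Type*} [AddCommGroup M] [LinearOrder M] [IsOrderedAddMonoid M]
    {A : Fin n → Fin n → M} {μ ν : Fin n → M} (h : IsCover A μ ν)
    (σ : Equiv.Perm (Fin n)) :
    ∑ i, A i (σ i) ≤ ∑ i, (μ i + ν i) := by
  calc ∑ i, A i (σ i) ≤ ∑ i, (μ i + ν (σ i)) :=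
        Finset.sum_le_sum fun i _ => h i (σ i)
    _ = ∑ i, μ i + ∑ i, ν (σ i) := Finset.sum_add_distrib
    _ = ∑ i, μ i + ∑ i, ν i := by rw [Equiv.sum_comp σ ν]
    _ = ∑ i, (μ i + ν i) := Finset.sum_add_distrib.symm

lemma exists_perm_of_minimal {n : ℕ} {M : Type*} [AddCommGroup M] [LinearOrder M] [IsOrderedAddMonoid M]
    {A : Fin n → Fin n → M} {μ ν : Fin n → M} (hmin : IsMinimalCover A μ ν) :
    ∃ σ : Equiv.Perm (Fin n), ∀ i, A i (σ i) = μ i + ν (σ i) := by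
  classical
  set r : Fin n → Finset (Fin n) :=
    fun i => Finset.univ.filter (fun j => A i j = μ i + ν j) with hr
  have hall : ∀ s : Finset (Fin n), s.card ≤ (s.biUnion r).card := by
    intro s
    by_contra hlt
    push_neg at hlt
    set T := s.biUnion r with hT
    have hsne : s.Nonempty := Finset.card_pos.mp (lt_of_le_of_lt (Nat.zero_le _) hlt)
    have hTne : Tᶜ.Nonempty := by
      rw [← Finset.card_pos, Finset.card_compl]
      have h1 : T.card < n := lt_of_lt_of_le hlt (by simpa using s.card_le_univ)
      rw [Fintype.card_fin]; omega
    have hPne : (s ×ˢ Tᶜ).Nonempty := hsne.product hTne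
    set ε := (s ×ˢ Tᶜ).inf' hPne (fun p => μ p.1 + ν p.2 - A p.1 p.2) with hε
    have hεpos : 0 < ε := by
      rw [hε, Finset.lt_inf'_iff]
      rintro ⟨i, j⟩ hp
      rw [Finset.mem_product] at hp
      have hj_not : j ∉ r i := fun hmem =>
        (Finset.mem_compl.mp hp.2) (Finset.mem_biUnion.mpr ⟨i, hp.1, hmem⟩)
      have hne : A i j ≠ μ i + ν j := by simpa [hr] using hj_not
      have hle := hmin.1 i j
      have hlt' : A i j < μ i + ν j := lt_of_le_of_ne hle hne
      exact sub_pos.mpr hlt'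
    set μ' : Fin n → M := fun i => μ i - (if i ∈ s then ε else 0) with hμ'
    set ν' : Fin n → M := fun j => ν j + (if j ∈ T then ε else 0) with hν'
    have hcov' : IsCover A μ' ν' := by
      intro i j
      by_cases hi : i ∈ s
      · by_cases hj : j ∈ T
        · simp only [hμ', hν', if_pos hi, if_pos hj]
          have heq : μ i - ε + (ν j + ε) = μ i + ν j := by abel
          rw [heq]; exact hmin.1 i j
        · simp only [hμ', hν', if_pos hi, if_neg hj, add_zero]
          have hεle : ε ≤ μ i + ν j - A i j :=
            Finset.inf'_le _
              (show (i, j) ∈ s ×ˢ Tᶜ from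
                Finset.mem_product.mpr ⟨hi, Finset.mem_compl.mpr hj⟩)
          have h2 : ε + A i j ≤ μ i + ν j := le_sub_iff_add_le.mp hεle
          have heq : μ i - ε + ν j = μ i + ν j - ε := by abel
          rw [heq, le_sub_iff_add_le, add_comm]
          exact h2
      · have hAij := hmin.1 i j
        by_cases hj : j ∈ T
        · simp only [hμ', hν', if_neg hi, if_pos hj, sub_zero, ← add_assoc]
          exact le_add_of_le_of_nonneg hAij hεpos.le
        · simp only [hμ', hν', if_neg hi, if_neg hj, sub_zero, add_zero]
          exact hAij
    have hsum_s : ∑ i, (if i ∈ s then ε else 0) = s.card • ε := by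
      rw [Finset.sum_ite_mem, Finset.univ_inter, Finset.sum_const]
    have hsum_T : ∑ i, (if i ∈ T then ε else 0) = T.card • ε := by
      rw [Finset.sum_ite_mem, Finset.univ_inter, Finset.sum_const]
    have hsum' : ∑ i, (μ' i + ν' i)
        = ∑ i, (μ i + ν i) - s.card • ε + T.card • ε := by
      have : ∀ i, μ' i + ν' i
          = (μ i + ν i) - (if i ∈ s then ε else 0) + (if i ∈ T then ε else 0) := by
        intro i; simp only [hμ', hν']; abel
      rw [Finset.sum_congr rfl (fun i _ => this i)]
      rw [Finset.sum_add_distrib, Finset.sum_sub_distrib, hsum_s, hsum_T]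
    have hmono := hmin.2 μ' ν' hcov'
    rw [hsum'] at hmono
    have h2 : ∑ i, (μ i + ν i) + s.card • ε ≤ ∑ i, (μ i + ν i) + T.card • ε := by
      calc ∑ i, (μ i + ν i) + s.card • ε
          ≤ ∑ i, (μ i + ν i) - s.card • ε + T.card • ε + s.card • ε :=
            add_le_add_left hmono _
        _ = ∑ i, (μ i + ν i) + T.card • ε := by abel
    have h3 : s.card • ε ≤ T.card • ε := le_of_add_le_add_left h2
    have hlt2 : T.card • ε < s.card • ε := nsmul_lt_nsmul_left hεpos hlt
    exact absurd h3 (not_le.mpr hlt2)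
  obtain ⟨f, hinj, hmem⟩ :=
    (Finset.all_card_le_biUnion_card_iff_exists_injective r).mp hall
  refine ⟨Equiv.ofBijective f (Finite.injective_iff_bijective.mp hinj), fun i => ?_⟩
  have := hmem i
  simp only [hr, Finset.mem_filter] at this
  exact this.2

theorem minimalCover_iff_exists_perm {n : ℕ} {M : Type*}
    [AddCommGroup M] [LinearOrder M] [IsOrderedAddMonoid M] (A : Fin n → Fin n → M) (μ ν : Fin n → M)
    (hcov : IsCover A μ ν) :
    (IsMinimalCover A μ ν ↔
        ∃ σ : Equiv.Perm (Fin n), ∀ i, A i (σ i) = μ i + ν (σ i)) ∧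
      (IsMinimalCover A μ ν → ∑ i, (μ i + ν i) = tropDet A) := by
  have key : ∀ σ : Equiv.Perm (Fin n), (∀ i, A i (σ i) = μ i + ν (σ i)) →
      ∑ i, (μ i + ν i) = ∑ i, A i (σ i) := by
    intro σ hσ
    calc ∑ i, (μ i + ν i) = ∑ i, μ i + ∑ i, ν i := Finset.sum_add_distrib
      _ = ∑ i, μ i + ∑ i, ν (σ i) := by rw [Equiv.sum_comp σ ν]
      _ = ∑ i, (μ i + ν (σ i)) := Finset.sum_add_distrib.symm
      _ = ∑ i, A i (σ i) := by
          exact (Finset.sum_congr rfl (fun i _ => (hσ i).symm))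
  constructor
  · constructor
    · exact fun hmin => exists_perm_of_minimal hmin
    · rintro ⟨σ, hσ⟩
      refine ⟨hcov, fun μ' ν' hcov' => ?_⟩
      rw [key σ hσ]
      exact transversal_le_cover hcov' σ
  · intro hmin
    obtain ⟨σ, hσ⟩ := exists_perm_of_minimal hmin
    apply le_antisymm
    · rw [key σ hσ]
      exact Finset.le_sup' (fun τ : Equiv.Perm (Fin n) => ∑ i, A i (τ i))
        (Finset.mem_univ σ)
    · exact Finset.sup'_le _ _ fun τ _ => transversal_le_cover hcov τ
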